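/- For a nonnegative integer n and a partition μ, the evaluation h_n[Ξ_μ] of the complete homogeneous symmetric function at the eigenvalues of a permutation matrix with cycle type μ equals the number of weak compositions α of n of length ℓ(μ) such that μ_i divides α_i for each i. -/

import Mathlib

open scoped BigOperators

/-- The list of `r`-th roots of unity for each part `r` of `μ` (eigenvalues of a
permutation matrix of cycle type `μ`), as a list. -/
noncomputable def xiL (μ : List ℕ) : List ℂ :=
  μ.flatMap fun r => (List.range r).map fun k =>
    Complex.exp (2 * Real.pi * Complex.I * k / r)

/-- Evaluation of the complete homogeneous symmetric function `h_n` on a list of values. -/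
noncomputable def hEvalL (n : ℕ) (L : List ℂ) : ℂ :=
  ∑ α ∈ Finset.univ.filter (fun α : Fin L.length → Fin (n + 1) => (∑ i, (α i).val) = n),
    ∏ i, L.get i ^ (α i).val

/-- Geometric series `∑ x^m t^m`. -/
noncomputable def geo (x : ℂ) : PowerSeries ℂ := PowerSeries.mk fun m => x ^ m

/-- Indicator series `∑_{r ∣ m} t^m`. -/
noncomputable def indSer (r : ℕ) : PowerSeries ℂ :=
  PowerSeries.mk fun m => if r ∣ m then 1 else 0

lemma one_sub_mul_geo (x : ℂ) :
    (1 - PowerSeries.C x * PowerSeries.X) * geo x = 1 := by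
  ext n
  rw [sub_mul, one_mul, map_sub, mul_assoc, PowerSeries.coeff_C_mul]
  cases n with
  | zero => simp [geo]
  | succ n =>
      simp [geo, PowerSeries.coeff_succ_X_mul, PowerSeries.coeff_one, pow_succ,
        mul_comm]

lemma one_sub_pow_mul_indSer (r : ℕ) (hr : 0 < r) :
    (1 - PowerSeries.X ^ r) * indSer r = 1 := by
  ext n
  rw [sub_mul, one_mul, map_sub, PowerSeries.coeff_X_pow_mul']
  simp only [indSer, PowerSeries.coeff_mk, PowerSeries.coeff_one]
  by_cases h : r ≤ n
  · have hn : n ≠ 0 := by omega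
    rw [if_pos h, if_neg hn]
    by_cases hd : r ∣ n
    · rw [if_pos hd, if_pos (Nat.dvd_sub hd dvd_rfl), sub_self]
    · rw [if_neg hd, if_neg (fun hc => hd (by
        have hne : n = (n - r) + r := (Nat.sub_add_cancel h).symm
        rw [hne]; exact Nat.dvd_add hc dvd_rfl)), sub_zero]
  · rw [if_neg h, sub_zero]
    by_cases hn : n = 0
    · subst hn; simp
    · rw [if_neg hn, if_neg (fun hd => h (Nat.le_of_dvd (Nat.pos_of_ne_zero hn) hd))]

open Polynomial in
lemma prod_one_sub_zeta_poly (r : ℕ) (hr : 0 < r) {ζ : ℂ} (hζ : IsPrimitiveRoot ζ r) :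
    ∏ k ∈ Finset.range r, (1 - Polynomial.C (ζ ^ k) * Polynomial.X) =
      1 - Polynomial.X ^ r := by
  have hζ0 : ζ ≠ 0 := hζ.ne_zero hr.ne'
  have h1 : (X ^ r - C (1 : ℂ)) = ∏ i ∈ Finset.range r, (X - C (ζ ^ i * 1)) :=
    X_pow_sub_C_eq_prod hζ hr (one_pow r)
  have h2 : (X ^ r - C (1 : ℂ)) = ∏ i ∈ Finset.range r, (X - C (ζ⁻¹ ^ i * 1)) :=
    X_pow_sub_C_eq_prod hζ.inv hr (one_pow r)
  have hc : ∏ k ∈ Finset.range r, (-(ζ ^ k)) = -1 := by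
    have h := congrArg (Polynomial.eval 0) h1
    simpa [eval_prod, zero_pow hr.ne'] using h.symm
  calc ∏ k ∈ Finset.range r, (1 - C (ζ ^ k) * X)
      = ∏ k ∈ Finset.range r, (C (-(ζ ^ k)) * (X - C (ζ⁻¹ ^ k * 1))) := by
        refine Finset.prod_congr rfl fun k _ => ?_
        have hinv : (ζ ^ k) * (ζ⁻¹ ^ k) = 1 := by
          rw [inv_pow, mul_inv_cancel₀ (pow_ne_zero k hζ0)]
        rw [mul_one, map_neg, neg_mul, mul_sub, ← map_mul, hinv, map_one]
        ring
    _ = C (∏ k ∈ Finset.range r, (-(ζ ^ k))) * ∏ k ∈ Finset.range r, (X - C (ζ⁻¹ ^ k * 1)) := by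
        rw [Finset.prod_mul_distrib, map_prod]
    _ = C (-1 : ℂ) * (X ^ r - C 1) := by rw [hc, ← h2]
    _ = 1 - X ^ r := by rw [map_neg, map_one, neg_one_mul, neg_sub]

lemma prod_one_sub_zeta (r : ℕ) (hr : 0 < r) {ζ : ℂ} (hζ : IsPrimitiveRoot ζ r) :
    ∏ k ∈ Finset.range r, (1 - PowerSeries.C (ζ ^ k) * PowerSeries.X) =
      1 - PowerSeries.X ^ r := by
  have h := congrArg (Polynomial.coeToPowerSeries.ringHom (R := ℂ))
    (prod_one_sub_zeta_poly r hr hζ)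
  simpa [map_prod, map_sub, map_mul, map_pow, map_one,
    Polynomial.coeToPowerSeries.ringHom_apply, Polynomial.coe_C, Polynomial.coe_X] using h

lemma prod_geo_zeta (r : ℕ) (hr : 0 < r) {ζ : ℂ} (hζ : IsPrimitiveRoot ζ r) :
    ∏ k ∈ Finset.range r, geo (ζ ^ k) = indSer r := by
  have h1 : (1 - PowerSeries.X ^ r) * ∏ k ∈ Finset.range r, geo (ζ ^ k) = 1 := by
    rw [← prod_one_sub_zeta r hr hζ, ← Finset.prod_mul_distrib,
      Finset.prod_congr rfl (fun k _ => one_sub_mul_geo (ζ ^ k)), Finset.prod_const_one]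
  calc ∏ k ∈ Finset.range r, geo (ζ ^ k)
      = ((1 - PowerSeries.X ^ r) * indSer r) * ∏ k ∈ Finset.range r, geo (ζ ^ k) := by
        rw [one_sub_pow_mul_indSer r hr, one_mul]
    _ = indSer r * ((1 - PowerSeries.X ^ r) * ∏ k ∈ Finset.range r, geo (ζ ^ k)) := by
        ring
    _ = indSer r := by rw [h1, mul_one]

lemma list_range_prod {M : Type*} [CommMonoid M] (n : ℕ) (f : ℕ → M) :
    ((List.range n).map f).prod = ∏ i ∈ Finset.range n, f i := by
  induction n with
  | zero => simp
  | succ n ih => rw [List.range_succ, List.map_append, List.prod_append,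
      Finset.prod_range_succ, ih]; simp

/-- Coefficient of a finite product of power series as a sum over compositions. -/
lemma coeff_prod_fin (m n : ℕ) (f : Fin m → PowerSeries ℂ) :
    PowerSeries.coeff n (∏ i, f i) =
      ∑ α ∈ Finset.univ.filter
        (fun α : Fin m → Fin (n + 1) => (∑ i, (α i).val) = n),
        ∏ i, PowerSeries.coeff (α i).val (f i) := by
  classical
  rw [PowerSeries.coeff_prod]
  refine Finset.sum_nbij' (i := fun l (j : Fin m) => (⟨l j % (n + 1), Nat.mod_lt _ n.succ_pos⟩ : Fin (n + 1)))
    (j := fun α => Finsupp.equivFunOnFinite.symm (fun i => (α i).val)) ?_ ?_ ?_ ?_ ?_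
  · intro l hl
    rw [Finset.mem_finsuppAntidiag] at hl
    have hle : ∀ j : Fin m, l j ≤ n := by
      intro j
      rw [← hl.1]
      exact Finset.single_le_sum (fun i _ => Nat.zero_le _) (Finset.mem_univ j)
    simp only [Finset.mem_filter, Finset.mem_univ, true_and]
    calc (∑ i, l i % (n + 1)) = ∑ i, l i := by
          exact Finset.sum_congr rfl fun i _ => Nat.mod_eq_of_lt (Nat.lt_succ_of_le (hle i))
      _ = n := hl.1
  · intro α hα
    rw [Finset.mem_finsuppAntidiag]
    simp only [Finset.mem_filter, Finset.mem_univ, true_and] at hα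
    constructor
    · simpa using hα
    · exact Finset.subset_univ _
  · intro l hl
    rw [Finset.mem_finsuppAntidiag] at hl
    have hle : ∀ j : Fin m, l j ≤ n := by
      intro j
      rw [← hl.1]
      exact Finset.single_le_sum (fun i _ => Nat.zero_le _) (Finset.mem_univ j)
    ext j
    simp [Nat.mod_eq_of_lt (Nat.lt_succ_of_le (hle j))]
  · intro α hα
    funext j
    ext
    simp [Nat.mod_eq_of_lt (α j).isLt]
  · intro l hl
    rw [Finset.mem_finsuppAntidiag] at hl
    have hle : ∀ j : Fin m, l j ≤ n := by
      intro j
      rw [← hl.1]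
      exact Finset.single_le_sum (fun i _ => Nat.zero_le _) (Finset.mem_univ j)
    refine Finset.prod_congr rfl fun i _ => ?_
    simp [Nat.mod_eq_of_lt (Nat.lt_succ_of_le (hle i))]

lemma hEvalL_eq_coeff (n : ℕ) (L : List ℂ) :
    hEvalL n L = PowerSeries.coeff n ((L.map geo).prod) := by
  have hmap : L.map geo = List.ofFn (fun i : Fin L.length => geo (L.get i)) := by
    conv_lhs => rw [← List.ofFn_get L]
    rw [List.map_ofFn]
    rfl
  rw [hmap, List.prod_ofFn, coeff_prod_fin]
  unfold hEvalL
  refine Finset.sum_congr rfl fun α _ => Finset.prod_congr rfl fun i _ => ?_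
  simp [geo]

lemma coeff_indSer_prod (n : ℕ) (μ : List ℕ) :
    PowerSeries.coeff n ((μ.map indSer).prod) =
      ((Finset.univ.filter fun α : Fin μ.length → Fin (n + 1) =>
        (∑ i, (α i).val) = n ∧ ∀ i, μ.get i ∣ (α i).val).card : ℂ) := by
  have hmap : μ.map indSer = List.ofFn (fun i : Fin μ.length => indSer (μ.get i)) := by
    conv_lhs => rw [← List.ofFn_get μ]
    rw [List.map_ofFn]
    rfl
  rw [hmap, List.prod_ofFn, coeff_prod_fin]
  have hcoeff : ∀ (α : Fin μ.length → Fin (n + 1)),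
      (∏ i, PowerSeries.coeff (α i).val (indSer (μ.get i))) =
        if (∀ i, μ.get i ∣ (α i).val) then (1 : ℂ) else 0 := by
    intro α
    simp only [indSer, PowerSeries.coeff_mk]
    rw [Finset.prod_boole]
    simp
  rw [Finset.sum_congr rfl (fun α _ => hcoeff α), Finset.sum_ite, Finset.sum_const_zero,
    add_zero, Finset.sum_const, nsmul_eq_mul, mul_one, Finset.filter_filter]

lemma xiL_map_geo_prod (μ : List ℕ) (hpos : ∀ i ∈ μ, 0 < i) :
    ((xiL μ).map geo).prod = (μ.map indSer).prod := by
  unfold xiL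
  have hco : ∀ r : ℕ, (do let a ← List.range r; pure ((a : ℂ))) =
      (List.range r).map (fun k : ℕ => (k : ℂ)) := by
    intro r
    show (List.range r).flatMap (fun a => [((a : ℕ) : ℂ)]) = _
    induction (List.range r) with
    | nil => rfl
    | cons a l ih => simp only [List.flatMap_cons, List.map_cons, ih, List.singleton_append]
  simp only [hco, List.map_map]
  rw [List.map_flatMap, List.flatMap_def, List.prod_flatten, List.map_map]
  refine congrArg List.prod (List.map_congr_left fun r hr => ?_)
  have hr0 : 0 < r := hpos r hr
  have hζ : IsPrimitiveRoot (Complex.exp (2 * Real.pi * Complex.I / r)) r :=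
    Complex.isPrimitiveRoot_exp r hr0.ne'
  have hroot : ∀ k : ℕ, Complex.exp (2 * Real.pi * Complex.I * k / r) =
      Complex.exp (2 * Real.pi * Complex.I / r) ^ k := by
    intro k
    rw [← Complex.exp_nat_mul]
    congr 1
    ring
  show (List.map geo ((List.range r).map fun k : ℕ =>
      Complex.exp (2 * Real.pi * Complex.I * (k : ℂ) / r))).prod = indSer r
  rw [List.map_map, list_range_prod, ← prod_geo_zeta r hr0 hζ]
  refine Finset.prod_congr rfl fun k _ => ?_
  show geo (Complex.exp (2 * Real.pi * Complex.I * k / r)) = _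
  rw [hroot k]

/-- `h_n[Ξ_μ]` equals the number of weak compositions `α` of `n` of length `ℓ(μ)`
with `μ_i ∣ α_i` for all `i`. -/
theorem hEval_at_cycle_type (n : ℕ) (μ : List ℕ) (hpos : ∀ i ∈ μ, 0 < i)
    (hsort : μ.Pairwise (· ≥ ·)) :
    hEvalL n (xiL μ) =
      ((Finset.univ.filter fun α : Fin μ.length → Fin (n + 1) =>
        (∑ i, (α i).val) = n ∧ ∀ i, μ.get i ∣ (α i).val).card : ℂ) := by
  rw [hEvalL_eq_coeff, xiL_map_geo_prod μ hpos, coeff_indSer_prod]
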